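/- For any cooperative game (N, ν) with n players, the Shapley value of each player i ∈ N equals the weighted average of its extended marginal contributions over all coalitions: φ_i = Σ_{S ⊆ N} [1 / ((n+1)·C(n,|S|))] · Δ'_i(S). -/

import Mathlib

open Finset

lemma shapley_key_frac (m k : ℕ) (hk : k ≤ m) :
    (1 : ℝ) / ((m+1) * (m.choose k)) =
      1 / ((m+2) * ((m+1).choose k)) + 1 / ((m+2) * ((m+1).choose (k+1))) := by
  have ha : 0 < (m.choose k : ℝ) := by exact_mod_cast Nat.choose_pos hk
  have hb : 0 < ((m+1).choose k : ℝ) := by exact_mod_cast Nat.choose_pos (hk.trans (Nat.le_succ m))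
  have hc : 0 < ((m+1).choose (k+1) : ℝ) := by exact_mod_cast Nat.choose_pos (Nat.succ_le_succ hk)
  have h1 : ((m:ℝ)+1) * m.choose k = (m+1).choose (k+1) * (k+1) := by
    exact_mod_cast congrArg (Nat.cast : ℕ → ℝ) (Nat.add_one_mul_choose_eq m k)
  have h2 : (m.choose k : ℝ) * (m+1) = (m+1).choose k * (m+1-k) := by
    have hcast := congrArg (Nat.cast : ℕ → ℝ) (Nat.choose_mul_succ_eq m k)
    push_cast [Nat.cast_sub (hk.trans (Nat.le_succ m))] at hcast
    linarith [hcast]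
  field_simp
  linear_combination (-((m+1).choose k : ℝ))*h1 + (-((m+1).choose (k+1) : ℝ))*h2

/-- For any cooperative game `(N, ν)` with `n` players, the Shapley value of each
player `i` equals the weighted average of its extended marginal contributions:
`φ_i = ∑_{S ⊆ N} 1/((n+1)·C(n,|S|)) · Δ'_i(S)` where `Δ'_i(S) = ν(S ∪ {i}) − ν(S \ {i})`. -/
theorem shapley_eq_extended_marginal_contributions
    {ι : Type*} [Fintype ι] [DecidableEq ι]
    (ν : Finset ι → ℝ) (hν : ν ∅ = 0) (i : ι) :
    (∑ S ∈ (Finset.univ.erase i).powerset,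
        (1 / ((Fintype.card ι : ℝ) * ((Fintype.card ι - 1).choose S.card))) *
          (ν (insert i S) - ν S))
      = ∑ S : Finset ι,
          (1 / (((Fintype.card ι : ℝ) + 1) * ((Fintype.card ι).choose S.card))) *
            (ν (insert i S) - ν (S.erase i)) := by
  classical
  obtain ⟨m, hm⟩ : ∃ m, Fintype.card ι = m + 1 :=
    ⟨Fintype.card ι - 1, (Nat.succ_pred_eq_of_pos (Fintype.card_pos_iff.mpr ⟨i⟩)).symm⟩
  have hni : i ∉ (Finset.univ : Finset ι).erase i := Finset.notMem_erase i _
  have huniv : (Finset.univ : Finset ι) = insert i (Finset.univ.erase i) :=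
    (Finset.insert_erase (Finset.mem_univ i)).symm
  have hRHS : ∑ S : Finset ι,
          (1 / (((Fintype.card ι : ℝ) + 1) * ((Fintype.card ι).choose S.card))) *
            (ν (insert i S) - ν (S.erase i))
      = ∑ S ∈ (Finset.univ.erase i).powerset,
          ((1 / (((Fintype.card ι : ℝ) + 1) * ((Fintype.card ι).choose S.card))) *
              (ν (insert i S) - ν (S.erase i))
            + (1 / (((Fintype.card ι : ℝ) + 1) * ((Fintype.card ι).choose (insert i S).card))) *
              (ν (insert i (insert i S)) - ν ((insert i S).erase i))) := by
    have h := Finset.sum_powerset_insert hni (fun S =>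
        (1 / (((Fintype.card ι : ℝ) + 1) * ((Fintype.card ι).choose S.card))) *
            (ν (insert i S) - ν (S.erase i)))
    rw [← huniv, Finset.powerset_univ] at h
    rw [h, Finset.sum_add_distrib]
  rw [hRHS]
  apply Finset.sum_congr rfl
  intro S hS
  rw [Finset.mem_powerset] at hS
  have hiS : i ∉ S := fun h => hni (hS h)
  have hcardle : S.card ≤ m := by
    have := Finset.card_le_card hS
    rw [Finset.card_erase_of_mem (Finset.mem_univ i), Finset.card_univ, hm] at this
    simpa using this
  rw [Finset.insert_idem, Finset.erase_insert hiS, Finset.erase_eq_of_notMem hiS,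
    Finset.card_insert_of_notMem hiS, hm]
  have hkey := shapley_key_frac m S.card hcardle
  simp only [Nat.add_sub_cancel]
  push_cast at hkey ⊢
  rw [← add_mul]
  congr 1
  rw [hkey]
  ring
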